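/- Let ℓ, m ≥ 2 be integers, α = ℓm+1, β = m. A finite sequence [n_1, …, n_k] of integers with |n_i| ≥ 2 for all i satisfies cf[n_1, …, n_k] = β/α if and only if it equals A = [ℓ, m] or it equals the length-m sequence B with B_1 = ℓ+1 and B_i = (−1)^{i−1}·2 for 2 ≤ i ≤ m. -/

import Mathlib

/-- The continued fraction value `cf [n_1, …, n_k] = 1/(n_1 + 1/(n_2 + ⋯ + 1/n_k))`. -/
def cf : List ℤ → ℚ
  | [] => 0
  | n :: L => 1 / ((n : ℚ) + cf L)

lemma cf_abs_lt_one : ∀ L : List ℤ, (∀ n ∈ L, 2 ≤ |n|) → |cf L| < 1 := by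
  intro L
  induction L with
  | nil => intro _; simp [cf]
  | cons n L ih =>
    intro hL
    have hn : (2:ℚ) ≤ |(n:ℚ)| := by exact_mod_cast hL n (by simp)
    have ih' := ih (fun x hx => hL x (by simp [hx]))
    have h1 : |(n:ℚ)| ≤ |(n:ℚ) + cf L| + |cf L| := by
      calc |(n:ℚ)| = |((n:ℚ) + cf L) + (-(cf L))| := by ring_nf
      _ ≤ |(n:ℚ) + cf L| + |(-(cf L))| := abs_add_le _ _
      _ = |(n:ℚ) + cf L| + |cf L| := by rw [abs_neg]
    have hd : 1 < |(n:ℚ) + cf L| := by linarith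
    rw [cf, abs_div, abs_one, div_lt_one (by linarith)]
    exact hd

lemma cf_denom_ne {n : ℤ} {L : List ℤ} (hL : ∀ x ∈ n :: L, 2 ≤ |x|) :
    (n:ℚ) + cf L ≠ 0 := by
  have hn : (2:ℚ) ≤ |(n:ℚ)| := by exact_mod_cast hL n (by simp)
  have h := cf_abs_lt_one L (fun x hx => hL x (by simp [hx]))
  intro h0
  have : (n:ℚ) = -(cf L) := by linarith [h0]
  rw [this, abs_neg] at hn
  linarith

lemma cf_ne_zero {n : ℤ} {L : List ℤ} (hL : ∀ x ∈ n :: L, 2 ≤ |x|) :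
    cf (n :: L) ≠ 0 := by
  rw [cf]
  exact one_div_ne_zero (cf_denom_ne hL)

lemma cf_cons_tail {n : ℤ} {L : List ℤ} {q : ℚ}
    (hL : ∀ x ∈ n :: L, 2 ≤ |x|) (h : cf (n :: L) = q) : cf L = 1 / q - n := by
  have hd := cf_denom_ne hL
  have hq : q ≠ 0 := h ▸ cf_ne_zero hL
  rw [cf, div_eq_iff hd] at h
  have h2 : (1:ℚ)/q = (n:ℚ) + cf L := by
    rw [div_eq_iff hq]
    linear_combination h
  linarith [h2]

lemma cf_eq_zero_iff {L : List ℤ} (hL : ∀ x ∈ L, 2 ≤ |x|) : cf L = 0 ↔ L = [] := by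
  constructor
  · intro h
    cases L with
    | nil => rfl
    | cons n L => exact absurd h (cf_ne_zero hL)
  · rintro rfl; rfl

lemma ofFn_alt_succ (k : ℕ) (s : ℤ) :
    List.ofFn (fun j : Fin (k+1) => (-1) ^ (j:ℕ) * 2 * s)
      = (2*s) :: List.ofFn (fun j : Fin k => (-1) ^ (j:ℕ) * 2 * (-s)) := by
  rw [List.ofFn_succ]
  have h0 : ((-1:ℤ)) ^ ((0 : Fin (k+1)):ℕ) * 2 * s = 2 * s := by simp
  rw [h0]
  congr 1
  apply congrArg
  funext i
  simp only [Fin.val_succ, pow_succ]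
  ring

lemma tail_forced : ∀ (k : ℕ) (s : ℤ), s = 1 ∨ s = -1 →
    ∀ L : List ℤ, (∀ n ∈ L, 2 ≤ |n|) →
    cf L = (s:ℚ) * k / (k + 1) →
    L = List.ofFn (fun j : Fin k => (-1) ^ (j:ℕ) * 2 * s) := by
  intro k
  induction k with
  | zero =>
    intro s _ L hL h
    simp only [Nat.cast_zero, mul_zero, zero_div] at h
    simp [(cf_eq_zero_iff hL).mp h]
  | succ k ih =>
    intro s hs L hL h
    have hk1 : (0:ℚ) < (k:ℚ) + 1 := by positivity
    have hk2 : (0:ℚ) < (k:ℚ) + 2 := by positivity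
    have hfrac1 : (1:ℚ) < ((k:ℚ)+2)/((k:ℚ)+1) := by
      rw [lt_div_iff₀ hk1]; linarith
    have hfrac2 : ((k:ℚ)+2)/((k:ℚ)+1) ≤ 2 := by
      rw [div_le_iff₀ hk1]; linarith
    have hs0 : ((s:ℚ)) ≠ 0 := by rcases hs with rfl | rfl <;> norm_num
    have hq : ((s:ℚ) * ((k:ℚ)+1) / ((k:ℚ) + 2)) ≠ 0 :=
      div_ne_zero (mul_ne_zero hs0 (ne_of_gt hk1)) (ne_of_gt hk2)
    have h' : cf L = (s:ℚ) * ((k:ℚ)+1) / ((k:ℚ) + 2) := by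
      rw [h]; push_cast; ring
    cases L with
    | nil =>
      rw [show cf ([] : List ℤ) = 0 from rfl] at h'
      exact absurd h'.symm hq
    | cons n L' =>
      have hL' : ∀ x ∈ L', 2 ≤ |x| := fun x hx => hL x (by simp [hx])
      have hn : 2 ≤ |n| := hL n (by simp)
      have ht := cf_cons_tail hL h'
      have hss : (s:ℚ) * s = 1 := by rcases hs with rfl | rfl <;> norm_num
      have hinv : (1:ℚ) / ((s:ℚ) * ((k:ℚ)+1) / ((k:ℚ) + 2)) = (s:ℚ) * (((k:ℚ)+2)/((k:ℚ)+1)) := by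
        rw [one_div_div]
        field_simp
        linear_combination (-1:ℚ) * hss
      rw [hinv] at ht
      have habs := cf_abs_lt_one L' hL'
      rw [ht, abs_lt] at habs
      obtain ⟨hab1, hab2⟩ := habs
      have hncase := le_abs.mp hn
      have hn2 : n = 2 * s := by
        rcases hs with rfl | rfl
        · push_cast at hab1 hab2 ⊢
          have h1 : (0:ℚ) < (n:ℚ) := by linarith
          have h2 : (n:ℚ) < 3 := by linarith
          have h1' : (0:ℤ) < n := by exact_mod_cast h1
          have h2' : n < (3:ℤ) := by exact_mod_cast h2
          omega
        · push_cast at hab1 hab2 ⊢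
          have h1 : (n:ℚ) < 0 := by linarith
          have h2 : (-3:ℚ) < (n:ℚ) := by linarith
          have h1' : n < (0:ℤ) := by exact_mod_cast h1
          have h2' : (-3:ℤ) < n := by exact_mod_cast h2
          omega
      have ht2 : cf L' = ((-s:ℤ):ℚ) * k / ((k:ℚ) + 1) := by
        rw [ht, hn2]
        push_cast
        field_simp
        ring
      rw [ofFn_alt_succ, ← ih (-s) (by omega) L' hL' ht2, hn2]

lemma cf_ofFn_alt : ∀ (k : ℕ) (s : ℤ), s = 1 ∨ s = -1 →
    cf (List.ofFn (fun j : Fin k => (-1) ^ (j:ℕ) * 2 * s)) = (s:ℚ) * k / (k + 1) := by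
  intro k
  induction k with
  | zero => intro s _; simp [cf]
  | succ k ih =>
    intro s hs
    rw [List.ofFn_succ]
    have hre : (List.ofFn fun i : Fin k => (-1) ^ ((i.succ : Fin (k+1)):ℕ) * 2 * s)
        = List.ofFn (fun j : Fin k => (-1) ^ (j:ℕ) * 2 * (-s)) := by
      congr 1; funext i
      simp only [Fin.val_succ, pow_succ]
      ring
    have hk1 : ((k:ℚ) + 1) ≠ 0 := by positivity
    have hk2 : ((k:ℚ) + 2) ≠ 0 := by positivity
    have hs' : -s = 1 ∨ -s = -1 := by omega
    rw [cf, hre, ih (-s) hs']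
    simp only [Fin.val_zero, pow_zero, one_mul]
    rcases hs with rfl | rfl <;> push_cast
    · rw [show (2:ℚ) + -1*(k:ℚ)/((k:ℚ)+1) = ((k:ℚ)+2)/((k:ℚ)+1) by
        field_simp; ring]
      rw [one_div_div]
      ring
    · rw [show (-2:ℚ) + 1*(k:ℚ)/((k:ℚ)+1) = (-((k:ℚ)+2))/((k:ℚ)+1) by
        field_simp; ring]
      rw [one_div_div, div_neg]
      ring



/-- For `ℓ, m ≥ 2`, `α = ℓm+1`, `β = m`: a sequence of integers all of absolute value
at least `2` has continued fraction value `β/α` iff it is `A = [ℓ, m]` or the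
length-`m` sequence `B` with `B_1 = ℓ+1` and `B_i = (−1)^{i−1}·2` for `2 ≤ i ≤ m`. -/
theorem cf_eq_iff_A_or_B (ℓ m : ℕ) (hℓ : 2 ≤ ℓ) (hm : 2 ≤ m)
    (L : List ℤ) (hL : ∀ n ∈ L, 2 ≤ |n|) :
    cf L = (m : ℚ) / ((ℓ : ℚ) * m + 1) ↔
      L = [(ℓ : ℤ), (m : ℤ)] ∨
      L = List.ofFn (fun j : Fin m =>
            if (j : ℕ) = 0 then (ℓ : ℤ) + 1 else (-1) ^ (j : ℕ) * 2) := by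
  obtain ⟨k, rfl⟩ : ∃ k, m = k + 1 := ⟨m - 1, by omega⟩
  have hk1 : 1 ≤ k := by omega
  have hmq : (2:ℚ) ≤ ((k:ℚ) + 1) := by
    have : (1:ℚ) ≤ (k:ℚ) := by exact_mod_cast hk1
    linarith
  have hℓq : (2:ℚ) ≤ (ℓ:ℚ) := by exact_mod_cast hℓ
  have hm0 : (0:ℚ) < (k:ℚ) + 1 := by positivity
  have hα : (0:ℚ) < (ℓ:ℚ) * ((k:ℚ)+1) + 1 := by nlinarith
  have hBsplit : List.ofFn (fun j : Fin (k+1) =>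
        if (j : ℕ) = 0 then (ℓ : ℤ) + 1 else (-1) ^ (j : ℕ) * 2)
      = ((ℓ:ℤ) + 1) :: List.ofFn (fun j : Fin k => (-1) ^ (j:ℕ) * 2 * (-1)) := by
    have hfun : (fun i : Fin k =>
        (if (((i.succ : Fin (k+1))) : ℕ) = 0 then (ℓ:ℤ) + 1
          else (-1) ^ (((i.succ : Fin (k+1))) : ℕ) * 2))
        = (fun j : Fin k => (-1) ^ (j:ℕ) * 2 * (-1)) := by
      funext i
      simp only [Fin.val_succ, Nat.add_eq_zero, Nat.succ_ne_zero, if_false, pow_succ]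
      norm_num
    rw [List.ofFn_succ, hfun]
    simp
  have hcast : ((k+1:ℕ):ℚ) = (k:ℚ) + 1 := by push_cast; ring
  constructor
  · intro h
    have h' : cf L = ((k:ℚ)+1) / ((ℓ:ℚ) * ((k:ℚ)+1) + 1) := by
      rw [h, hcast]
    have hq0 : ((k:ℚ)+1) / ((ℓ:ℚ) * ((k:ℚ)+1) + 1) ≠ 0 := ne_of_gt (div_pos hm0 hα)
    cases L with
    | nil =>
      rw [show cf ([] : List ℤ) = 0 from rfl] at h'
      exact absurd h'.symm hq0
    | cons n1 L1 =>
      have hL1 : ∀ x ∈ L1, 2 ≤ |x| := fun x hx => hL x (by simp [hx])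
      have ht1 := cf_cons_tail hL h'
      have hinv : (1:ℚ) / (((k:ℚ)+1) / ((ℓ:ℚ) * ((k:ℚ)+1) + 1)) = (ℓ:ℚ) + 1/((k:ℚ)+1) := by
        rw [one_div_div]
        field_simp
      rw [hinv] at ht1
      have habs := cf_abs_lt_one L1 hL1
      rw [ht1, abs_lt] at habs
      obtain ⟨hab1, hab2⟩ := habs
      have h1m1 : (0:ℚ) < 1/((k:ℚ)+1) := by positivity
      have h1m2 : (1:ℚ)/((k:ℚ)+1) ≤ 1/2 := by
        rw [div_le_div_iff₀ hm0 (by norm_num : (0:ℚ) < 2)]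
        linarith
      have hn1 : n1 = (ℓ:ℤ) ∨ n1 = (ℓ:ℤ) + 1 := by
        have l1 : (ℓ:ℚ) - 1 < (n1:ℚ) := by linarith
        have l2 : (n1:ℚ) < (ℓ:ℚ) + 2 := by linarith
        have l1' : (ℓ:ℤ) - 1 < n1 := by exact_mod_cast l1
        have l2' : n1 < (ℓ:ℤ) + 2 := by exact_mod_cast l2
        omega
      rcases hn1 with rfl | rfl
      · left
        have ht1' : cf L1 = 1/((k:ℚ)+1) := by rw [ht1]; push_cast; ring
        cases L1 with
        | nil =>
          exfalso
          rw [show cf ([] : List ℤ) = 0 from rfl] at ht1'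
          exact (ne_of_gt h1m1) ht1'.symm
        | cons n2 L2 =>
          have hL2 : ∀ x ∈ L2, 2 ≤ |x| := fun x hx => hL1 x (by simp [hx])
          have ht2 := cf_cons_tail hL1 ht1'
          rw [one_div_one_div] at ht2
          have habs2 := cf_abs_lt_one L2 hL2
          rw [ht2, abs_lt] at habs2
          have c1 : (-1:ℤ) < ((k:ℤ)+1) - n2 := by
            have : (-1:ℚ) < (((k:ℤ)+1) - n2 : ℤ) := by push_cast; linarith [habs2.1]
            exact_mod_cast this
          have c2 : ((k:ℤ)+1) - n2 < 1 := by
            have : ((((k:ℤ)+1) - n2 : ℤ):ℚ) < 1 := by push_cast; linarith [habs2.2]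
            exact_mod_cast this
          have hn2 : n2 = ((k+1:ℕ):ℤ) := by push_cast; omega
          have hL2nil : L2 = [] := by
            apply (cf_eq_zero_iff hL2).mp
            rw [ht2, hn2]
            push_cast
            ring
          rw [hn2, hL2nil]
      · right
        have ht1' : cf L1 = ((-1:ℤ):ℚ) * (k:ℚ) / ((k:ℚ) + 1) := by
          rw [ht1]
          push_cast
          field_simp
          ring
        have := tail_forced k (-1) (Or.inr rfl) L1 hL1 ht1'
        rw [hBsplit, this]
  · rintro (rfl | rfl)
    · show (1:ℚ) / (((ℓ:ℤ):ℚ) + cf [((k+1:ℕ):ℤ)]) = _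
      rw [show cf [((k+1:ℕ):ℤ)] = 1 / (((k+1:ℕ):ℚ) + 0) from rfl]
      rw [add_zero, hcast]
      rw [show ((ℓ:ℤ):ℚ) + 1/((k:ℚ)+1) = ((ℓ:ℚ) * ((k:ℚ)+1) + 1)/((k:ℚ)+1) by
        field_simp; push_cast; ring]
      rw [one_div_div]
    · rw [hBsplit, cf, cf_ofFn_alt k (-1) (Or.inr rfl)]
      rw [show (((ℓ:ℤ)+1:ℤ):ℚ) + ((-1:ℤ):ℚ) * (k:ℚ) / ((k:ℚ)+1)
          = ((ℓ:ℚ) * ((k:ℚ)+1) + 1)/((k:ℚ)+1) by push_cast; field_simp; ring]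
      rw [one_div_div]
      push_cast
      ring
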